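/- Let b₁,…,b_r : ℝⁿ → ℝ be polynomials and suppose C = {x : b_i(x) ≥ 0 for all i = 1,…,r} is compact and nonempty. Suppose that for every x ∈ C there exists u ∈ ℝᵐ with Au ≤ c and ∇b_i(x)ᵀ(f(x) + g(x)u) > 0 for every index i with b_i(x) = 0, where f, g are polynomial maps. Then C is feedback controlled positive invariant: there exists a continuous function μ : C → ℝᵐ with Aμ(x) ≤ c for all x ∈ C and (f(x) + g(x)μ(x)) ∈ T_C(x) for all x ∈ ∂C. -/

import Mathlib

open Filter MvPolynomial

/-- The Euclidean-distance realization of a point of `ℝⁿ`. -/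
noncomputable def toEuc {n : ℕ} (x : Fin n → ℝ) : EuclideanSpace ℝ (Fin n) :=
  (EuclideanSpace.equiv (Fin n) ℝ).symm x

/-- The Bouligand tangent cone to `D ⊆ ℝⁿ` at `x`, with Euclidean distance. -/
noncomputable def tangentConeAt' {n : ℕ} (D : Set (Fin n → ℝ)) (x : Fin n → ℝ) :
    Set (Fin n → ℝ) :=
  {z | Filter.liminf (fun τ : ℝ => Metric.infDist (toEuc (x + τ • z)) (toEuc '' D) / τ)
        (nhdsWithin 0 (Set.Ioi (0 : ℝ))) = 0}

/-- if `C = ⋂ i {b i ≥ 0}` is compact and nonempty, and at every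
`x ∈ C` some admissible input makes the active constraints strictly increase, then
`C` is feedback controlled positive invariant. -/
lemma hasDerivAt_eval_line {n : ℕ} (P : MvPolynomial (Fin n) ℝ) (x z : Fin n → ℝ) (t : ℝ) :
    HasDerivAt (fun τ : ℝ => eval (x + τ • z) P)
      (∑ k, eval (x + t • z) (pderiv k P) * z k) t := by
  induction P using MvPolynomial.induction_on with
  | C a => simpa using hasDerivAt_const t a
  | add p q hp hq =>
      simpa [map_add, add_mul, Finset.sum_add_distrib, Pi.add_def] using hp.add hq
  | mul_X p j hp =>
      have hg : HasDerivAt (fun τ : ℝ => x j + τ * z j) (z j) t := by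
        simpa using ((hasDerivAt_id t).mul_const (z j)).const_add (x j)
      have key := hp.mul hg
      have hfun : (fun τ : ℝ => eval (x + τ • z) (p * X j)) =
          fun τ : ℝ => eval (x + τ • z) p * (x j + τ * z j) := by
        funext τ; simp [smul_eq_mul]
      have hval : (∑ k, eval (x + t • z) (pderiv k (p * X j)) * z k) =
          (∑ k, eval (x + t • z) (pderiv k p) * z k) * (x j + t * z j) +
            eval (x + t • z) p * z j := by
        simp only [pderiv_mul, pderiv_X, map_add, map_mul, eval_X, add_mul,
          Finset.sum_add_distrib, Finset.sum_mul, Pi.add_apply, Pi.smul_apply, smul_eq_mul]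
        congr 1
        · exact Finset.sum_congr rfl fun k _ => by ring
        · simp [Pi.single_apply, Finset.sum_ite_eq]
      rw [hfun, hval]
      exact key

theorem feedback_cpi_simple {n m p r : ℕ}
    (b : Fin r → MvPolynomial (Fin n) ℝ)
    (f : Fin n → MvPolynomial (Fin n) ℝ)
    (g : Fin n → Fin m → MvPolynomial (Fin n) ℝ)
    (A : Matrix (Fin p) (Fin m) ℝ) (c : Fin p → ℝ)
    (Cset : Set (Fin n → ℝ))
    (hC : Cset = {x : Fin n → ℝ | ∀ i : Fin r, 0 ≤ eval x (b i)})
    (hcomp : IsCompact Cset) (hne : Cset.Nonempty)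
    (hfeas : ∀ x ∈ Cset, ∃ u : Fin m → ℝ, A.mulVec u ≤ c ∧
      ∀ i : Fin r, eval x (b i) = 0 →
        0 < ∑ k, eval x (pderiv k (b i)) * (eval x (f k) + ∑ j, eval x (g k j) * u j)) :
    ∃ μ : (Fin n → ℝ) → (Fin m → ℝ), ContinuousOn μ Cset ∧
      (∀ x ∈ Cset, A.mulVec (μ x) ≤ c) ∧
      ∀ x ∈ frontier Cset,
        (fun i => eval x (f i) + ∑ j, eval x (g i j) * μ x j) ∈ tangentConeAt' Cset x := by
  classical
  -- the "directional derivative" pairing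
  set L : Fin r → (Fin n → ℝ) → (Fin m → ℝ) → ℝ := fun i x u =>
    ∑ k, eval x (pderiv k (b i)) * (eval x (f k) + ∑ j, eval x (g k j) * u j) with hL
  have hLcont : ∀ i u, Continuous fun x => L i x u := by
    intro i u
    apply continuous_finset_sum
    intro k _
    exact (MvPolynomial.continuous_eval _).mul
      ((MvPolynomial.continuous_eval _).add
        (continuous_finset_sum _ fun j _ =>
          (MvPolynomial.continuous_eval _).mul continuous_const))
  -- good neighborhoods
  have key : ∀ x₀ : {y // y ∈ Cset}, ∃ (δ : ℝ) (u : Fin m → ℝ), 0 < δ ∧ A.mulVec u ≤ c ∧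
      ∀ x ∈ Metric.ball (x₀ : Fin n → ℝ) δ, ∀ i, 0 < eval x (b i) ∨ 0 < L i x u := by
    rintro ⟨x₀, hx₀⟩
    obtain ⟨u, hAu, hu⟩ := hfeas x₀ hx₀
    set W : Set (Fin n → ℝ) := {x | ∀ i, 0 < eval x (b i) ∨ 0 < L i x u} with hW
    have hWopen : IsOpen W := by
      have : W = ⋂ i, ({x | 0 < eval x (b i)} ∪ {x | 0 < L i x u}) := by
        ext x; simp [hW, Set.mem_iInter, Set.mem_union]
      rw [this]
      exact isOpen_iInter_of_finite fun i =>
        (isOpen_lt continuous_const (MvPolynomial.continuous_eval _)).union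
          (isOpen_lt continuous_const (hLcont i u))
    have hx₀W : x₀ ∈ W := by
      intro i
      rcases eq_or_lt_of_le ((hC ▸ hx₀) i) with h | h
      · exact Or.inr (hu i h.symm)
      · exact Or.inl h
    obtain ⟨δ, hδ, hball⟩ := Metric.isOpen_iff.mp hWopen x₀ hx₀W
    exact ⟨δ, u, hδ, hAu, fun x hx i => hball hx i⟩
  choose δ u hδ hAu hU using key
  -- finite subcover
  obtain ⟨T, hT⟩ := hcomp.elim_finite_subcover
    (fun x₀ : {y // y ∈ Cset} => Metric.ball (x₀ : Fin n → ℝ) (δ x₀))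
    (fun _ => Metric.isOpen_ball)
    (fun x hx => Set.mem_iUnion.mpr ⟨⟨x, hx⟩, Metric.mem_ball_self (hδ _)⟩)
  -- bump functions
  set ψ : {y // y ∈ Cset} → (Fin n → ℝ) → ℝ :=
    fun k x => max (δ k - dist x (k : Fin n → ℝ)) 0 with hψ
  have hψcont : ∀ k, Continuous (ψ k) := fun k =>
    (continuous_const.sub (continuous_id.dist continuous_const)).max continuous_const
  have hψnonneg : ∀ k x, 0 ≤ ψ k x := fun k x => le_max_right _ _
  have hψball : ∀ k x, 0 < ψ k x → x ∈ Metric.ball (k : Fin n → ℝ) (δ k) := by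
    intro k x h
    rcases lt_max_iff.mp h with h | h
    · exact Metric.mem_ball.mpr (by linarith)
    · exact absurd h (lt_irrefl 0)
  have hψball' : ∀ (k : {y // y ∈ Cset}) (x : Fin n → ℝ),
      x ∈ Metric.ball (k : Fin n → ℝ) (δ k) → 0 < ψ k x := by
    intro k x h
    exact lt_max_iff.mpr (Or.inl (by have := Metric.mem_ball.mp h; linarith))
  set S : (Fin n → ℝ) → ℝ := fun x => ∑ k ∈ T, ψ k x with hS
  have hScont : Continuous S := continuous_finset_sum _ fun k _ => hψcont k
  have hSpos : ∀ x ∈ Cset, 0 < S x := by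
    intro x hx
    obtain ⟨k, hkT, hk⟩ := Set.mem_iUnion₂.mp (hT hx)
    exact Finset.sum_pos' (fun k _ => hψnonneg k x) ⟨k, hkT, hψball' k x hk⟩
  set μ : (Fin n → ℝ) → (Fin m → ℝ) :=
    fun x j => (∑ k ∈ T, ψ k x * u k j) / S x with hμ
  refine ⟨μ, ?_, ?_, ?_⟩
  · -- continuity
    rw [continuousOn_pi]
    intro j
    exact ((continuous_finset_sum _ fun k _ =>
      (hψcont k).mul continuous_const).continuousOn).div hScont.continuousOn
      (fun x hx => (hSpos x hx).ne')
  · -- input constraints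
    intro x hx q
    have hSx := hSpos x hx
    have : A.mulVec (μ x) q = (∑ k ∈ T, ψ k x * A.mulVec (u k) q) / S x := by
      simp only [Matrix.mulVec, dotProduct, hμ, ← mul_div_assoc]
      rw [← Finset.sum_div]
      congr 1
      simp only [Finset.mul_sum]
      rw [Finset.sum_comm]
      exact Finset.sum_congr rfl fun k _ => Finset.sum_congr rfl fun j _ => by ring
    rw [this, div_le_iff₀ hSx]
    calc ∑ k ∈ T, ψ k x * A.mulVec (u k) q
        ≤ ∑ k ∈ T, ψ k x * c q :=
          Finset.sum_le_sum fun k _ =>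
            mul_le_mul_of_nonneg_left (hAu k q) (hψnonneg k x)
      _ = c q * S x := by rw [← Finset.sum_mul, mul_comm]
  · -- tangent cone
    intro x hxf
    have hCclosed : IsClosed Cset := hcomp.isClosed
    have hx : x ∈ Cset := by
      have := frontier_subset_closure hxf
      rwa [hCclosed.closure_eq] at this
    have hSx := hSpos x hx
    set z : Fin n → ℝ := fun i => eval x (f i) + ∑ j, eval x (g i j) * μ x j with hz
    -- each constraint is either inactive or strictly increasing
    have hgood : ∀ i, 0 < eval x (b i) ∨ 0 < ∑ k, eval x (pderiv k (b i)) * z k := by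
      intro i
      rcases eq_or_lt_of_le ((hC ▸ hx) i) with hb0 | hb0
      · right
        have haff : S x * ∑ k, eval x (pderiv k (b i)) * z k
            = ∑ k' ∈ T, ψ k' x * L i x (u k') := by
          rw [Finset.mul_sum]
          have : ∀ k, S x * (eval x (pderiv k (b i)) * z k)
              = ∑ k' ∈ T, ψ k' x * (eval x (pderiv k (b i)) *
                  (eval x (f k) + ∑ j, eval x (g k j) * u k' j)) := by
            intro k
            have hzk : S x * z k = S x * eval x (f k)
                + ∑ j, eval x (g k j) * (∑ k' ∈ T, ψ k' x * u k' j) := by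
              simp only [hz, hμ, mul_add, Finset.mul_sum]
              congr 1
              refine Finset.sum_congr rfl fun j _ => ?_
              rw [mul_comm (S x), mul_assoc, div_mul_cancel₀ _ hSx.ne', Finset.mul_sum]
            calc S x * (eval x (pderiv k (b i)) * z k)
                = eval x (pderiv k (b i)) * (S x * z k) := by ring
              _ = eval x (pderiv k (b i)) * (S x * eval x (f k)
                  + ∑ j, eval x (g k j) * (∑ k' ∈ T, ψ k' x * u k' j)) := by rw [hzk]
              _ = ∑ k' ∈ T, ψ k' x * (eval x (pderiv k (b i)) *
                  (eval x (f k) + ∑ j, eval x (g k j) * u k' j)) := by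
                  simp only [hS, mul_add, Finset.mul_sum, Finset.sum_mul,
                    Finset.sum_add_distrib]
                  congr 1
                  · exact Finset.sum_congr rfl fun k' _ => by ring
                  · rw [Finset.sum_comm]
                    exact Finset.sum_congr rfl fun k' _ =>
                      Finset.sum_congr rfl fun j _ => by ring
            -- end calc
          rw [Finset.sum_congr rfl fun k _ => this k, Finset.sum_comm]
          simp only [hL, Finset.mul_sum]
        have hpos : 0 < ∑ k' ∈ T, ψ k' x * L i x (u k') := by
          obtain ⟨k₀, hk₀T, hk₀⟩ := Set.mem_iUnion₂.mp (hT hx)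
          have hterm : ∀ k' ∈ T, 0 ≤ ψ k' x * L i x (u k') := by
            intro k' _
            rcases eq_or_lt_of_le (hψnonneg k' x) with h0 | h0
            · rw [← h0, zero_mul]
            · have := hU k' x (hψball k' x h0) i
              rcases this with h | h
              · rw [← hb0] at h; exact absurd h (lt_irrefl _)
              · exact le_of_lt (mul_pos h0 h)
          refine Finset.sum_pos' hterm ⟨k₀, hk₀T, ?_⟩
          have hψ0 := hψball' k₀ x hk₀
          rcases hU k₀ x hk₀ i with h | h
          · rw [← hb0] at h; exact absurd h (lt_irrefl _)
          · exact mul_pos hψ0 h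
        nlinarith [hSx, hpos, haff]
      · exact Or.inl hb0
    -- eventually in Cset along the positive direction
    have hev : ∀ i : Fin r, ∀ᶠ τ in nhdsWithin (0:ℝ) (Set.Ioi 0),
        0 ≤ eval (x + τ • z) (b i) := by
      intro i
      rcases eq_or_lt_of_le ((hC ▸ hx) i) with hb0 | hb
      · -- active constraint: use the derivative
        have hd : 0 < ∑ k, eval x (pderiv k (b i)) * z k :=
          (hgood i).resolve_left (by rw [← hb0]; exact lt_irrefl 0)
        set φ : ℝ → ℝ := fun τ => eval (x + τ • z) (b i) with hφ
        have hφ0 : φ 0 = 0 := by simp [hφ, ← hb0]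
        have hder : HasDerivAt φ (∑ k, eval x (pderiv k (b i)) * z k) 0 := by
          have := hasDerivAt_eval_line (b i) x z 0
          simpa using this
        have hslope := hasDerivAt_iff_tendsto_slope.mp hder
        have hslope' : Filter.Tendsto (slope φ 0) (nhdsWithin (0:ℝ) (Set.Ioi 0))
            (nhds (∑ k, eval x (pderiv k (b i)) * z k)) :=
          hslope.mono_left (nhdsWithin_mono 0 (fun τ hτ => ne_of_gt hτ))
        have hev1 : ∀ᶠ τ in nhdsWithin (0:ℝ) (Set.Ioi 0), 0 < slope φ 0 τ :=
          hslope'.eventually (eventually_gt_nhds hd)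
        filter_upwards [hev1, self_mem_nhdsWithin] with τ hs (hτ : τ ∈ Set.Ioi (0:ℝ))
        have hτ0 : (0:ℝ) < τ := hτ
        rw [slope_def_field] at hs
        have : 0 < (φ τ - φ 0) / (τ - 0) := hs
        rw [hφ0, sub_zero, sub_zero] at this
        have := (div_pos_iff.mp this)
        rcases this with ⟨h1, _⟩ | ⟨_, h2⟩
        · exact le_of_lt h1
        · linarith
      · have hcont : ContinuousAt (fun τ : ℝ => eval (x + τ • z) (b i)) 0 :=
          ((MvPolynomial.continuous_eval (b i)).comp
            (continuous_const.add (continuous_id.smul continuous_const))).continuousAt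
        have : ∀ᶠ τ in nhds (0:ℝ), 0 < eval (x + τ • z) (b i) := by
          have h0 : (0:ℝ) < eval (x + (0:ℝ) • z) (b i) := by simpa using hb
          exact hcont.eventually (eventually_gt_nhds h0)
        exact (this.filter_mono nhdsWithin_le_nhds).mono fun τ h => le_of_lt h
    have hall : ∀ᶠ τ in nhdsWithin (0:ℝ) (Set.Ioi 0),
        Metric.infDist (toEuc (x + τ • z)) (toEuc '' Cset) / τ = 0 := by
      filter_upwards [eventually_all.mpr hev] with τ hτ
      have hmem : x + τ • z ∈ Cset := by rw [hC]; exact hτ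
      rw [Metric.infDist_zero_of_mem (Set.mem_image_of_mem _ hmem), zero_div]
    show Filter.liminf _ _ = 0
    rw [Filter.liminf_congr hall]
    exact Filter.liminf_const 0
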